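/- Let φ ∈ U be a solution of 𝓕(φ) = 0, and define φ̃ : [0,1] → 𝓗 by φ̃( (∫₀^α |φ'(s)|ds)/L(φ) ) := φ(α) for α ∈ [0,1] (reparameterization by normalized arc length). Then φ̃ ∈ U and φ̃ solves the MEP problem: P^⊥_{φ̃'(α)}∇E(φ̃(α)) = 0 for all α ∈ [0,1] and Γ(φ̃) ≡ 0. -/

import Mathlib

noncomputable section

open Set
open scoped RealInnerProductSpace Topology

variable {H : Type*} [NormedAddCommGroup H] [InnerProductSpace ℝ H] [CompleteSpace H]

/-- Orthogonal projection of `y` onto the span of `v` (`P_v y`). -/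
def Pproj (v y : H) : H := ⟪y, ‖v‖⁻¹ • v⟫ • (‖v‖⁻¹ • v)

/-- Projection of `y` onto the orthogonal complement of `v` (`P_v^⊥ y`). -/
def Pperp (v y : H) : H := y - Pproj v y

/-- `f` is `C¹` on `[a,b]` with derivative `f'`. -/
def C1On {F : Type*} [NormedAddCommGroup F] [NormedSpace ℝ F] (a b : ℝ) (f f' : ℝ → F) : Prop :=
  (∀ α ∈ Icc a b, HasDerivWithinAt f (f' α) (Icc a b) α) ∧ ContinuousOn f' (Icc a b)

/-- `f` is `C²` on `[a,b]`. -/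
def C2On {F : Type*} [NormedAddCommGroup F] [NormedSpace ℝ F] (a b : ℝ) (f f' f'' : ℝ → F) : Prop :=
  C1On a b f f' ∧ C1On a b f' f''

/-- The length `L(φ)` of a curve with derivative `φ'`. -/
def len {F : Type*} [NormedAddCommGroup F] (φ' : ℝ → F) : ℝ := ∫ s in (0:ℝ)..1, ‖φ' s‖

/-- `Γ(φ)(α) = ∫₀^α |φ'| − α L(φ)`. -/
def Gam {F : Type*} [NormedAddCommGroup F] (φ' : ℝ → F) (α : ℝ) : ℝ :=
  (∫ s in (0:ℝ)..α, ‖φ' s‖) - α * len φ'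

/-- The admissible class `U` of regular curves joining `yA` to `yB`. -/
def InU (yA yB : H) (φ φ' : ℝ → H) : Prop :=
  C1On 0 1 φ φ' ∧ φ 0 = yA ∧ φ 1 = yB ∧ ∀ α ∈ Icc (0:ℝ) 1, φ' α ≠ 0

/-- The MEP equations. -/
def SolvesMEP (E : H → ℝ) (φ φ' : ℝ → H) : Prop :=
  (∀ α ∈ Icc (0:ℝ) 1, Pperp (φ' α) (gradient E (φ α)) = 0) ∧
  (∀ α ∈ Icc (0:ℝ) 1, Gam φ' α = 0)

/-- Strong local minimizer. -/
def IsStrongMin (E : H → ℝ) (hess : H → H →L[ℝ] H) (y : H) : Prop :=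
  gradient E y = 0 ∧ ∃ c > 0, ∀ u : H, c * ‖u‖ ^ 2 ≤ ⟪hess y u, u⟫

/-- Index-1 saddle point. -/
def IsIndex1Saddle (E : H → ℝ) (hess : H → H →L[ℝ] H) (y : H) : Prop :=
  gradient E y = 0 ∧
    ∃ v₁ : H, v₁ ≠ 0 ∧ (∃ l < (0:ℝ), hess y v₁ = l • v₁) ∧
      ∃ c > 0, ∀ u : H, ⟪u, v₁⟫ = 0 → c * ‖u‖ ^ 2 ≤ ⟪hess y u, u⟫

/-- Assumption (A). -/
def AssumpA (E : H → ℝ) (hess : H → H →L[ℝ] H) (yA yB : H)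
    (φb φb' φb'' : ℝ → H) (sbar : ℝ) : Prop :=
  C2On 0 1 φb φb' φb'' ∧ InU yA yB φb φb' ∧ SolvesMEP E φb φb' ∧
  sbar ∈ Ioo (0:ℝ) 1 ∧
  IsStrongMin E hess yA ∧ IsStrongMin E hess yB ∧
  IsIndex1Saddle E hess (φb sbar) ∧
  ∀ α ∈ Icc (0:ℝ) 1, gradient E (φb α) = 0 → α = 0 ∨ α = sbar ∨ α = 1

/-- `λ̄(α) = L(φ̄)⁻² (∇E(φ̄(α)), φ̄'(α))`. -/
def lamBar (E : H → ℝ) (φ φ' : ℝ → H) (α : ℝ) : ℝ :=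
  ((len φ') ^ 2)⁻¹ * ⟪gradient E (φ α), φ' α⟫

/-- The MEP operator `𝓕`. -/
def Fop (E : H → ℝ) (sbar σA σB : ℝ) (φ φ' : ℝ → H) (α : ℝ) : H :=
  Pperp (φ' α) (gradient E (φ α))
    - ((‖φ' α‖ - len φ') / len φ') • Pproj (φ' α) (gradient E (φ α))
    + (α * (α - 1) * ‖φ' α‖ / (sbar * (sbar - 1) * len φ')) •
        Pproj (φ' α) (gradient E (φ sbar))
    + ((σA + σB) * (Gam φ' α - α * (α - 1) / (sbar * (sbar - 1)) * Gam φ' sbar)) •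
        (‖φ' α‖⁻¹ • φ' α)

/-- Membership in the image space `Y`. -/
def MemY {F : Type*} [NormedAddCommGroup F] [NormedSpace ℝ F] (sbar : ℝ) (f : ℝ → F) : Prop :=
  ContinuousOn f (Icc (0:ℝ) 1) ∧ f 0 = 0 ∧ f 1 = 0 ∧
  DifferentiableWithinAt ℝ f (Icc (0:ℝ) 1) 0 ∧
  DifferentiableWithinAt ℝ f (Icc (0:ℝ) 1) sbar ∧
  DifferentiableWithinAt ℝ f (Icc (0:ℝ) 1) 1

/-- Membership in the space `X`. -/
def MemX {F : Type*} [NormedAddCommGroup F] [NormedSpace ℝ F] (ψ ψ' : ℝ → F) : Prop :=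
  C1On 0 1 ψ ψ' ∧ ψ 0 = 0 ∧ ψ 1 = 0

/-- The `C¹` (and `X`) norm. -/
def normC1 {F : Type*} [NormedAddCommGroup F] (ψ ψ' : ℝ → F) : ℝ :=
  (⨆ α : Icc (0:ℝ) 1, ‖ψ (α : ℝ)‖) + ⨆ α : Icc (0:ℝ) 1, ‖ψ' (α : ℝ)‖

/-- The weighted norm on `Y`. -/
def normY {F : Type*} [NormedAddCommGroup F] (sbar : ℝ) (f : ℝ → F) : ℝ :=
  (⨆ α : Ioo (0:ℝ) 1, ‖f (α : ℝ)‖ / |(α : ℝ) * ((α : ℝ) - 1)|) +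
    ⨆ α : ↥(Icc (0:ℝ) 1 \ {sbar}), ‖f (α : ℝ) - f sbar‖ / |(α : ℝ) - sbar|

/-- `∫₀¹ (φ̄'(s), ψ'(s))/|φ̄'(s)| ds`. -/
def gInt (φb' ψ' : ℝ → H) : ℝ := ∫ s in (0:ℝ)..1, ⟪φb' s, ψ' s⟫ / ‖φb' s‖

/-- `g_ψ(α)` (the linearisation `δΓ(φ̄)ψ`). -/
def gFun (φb' ψ' : ℝ → H) (α : ℝ) : ℝ :=
  (∫ s in (0:ℝ)..α, ⟪φb' s, ψ' s⟫ / ‖φb' s‖) - α * gInt φb' ψ'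

/-- `g_ψ'(α)`. -/
def gFun' (φb' ψ' : ℝ → H) (α : ℝ) : ℝ := ⟪φb' α, ψ' α⟫ / ‖φb' α‖ - gInt φb' ψ'

/-- The linearised MEP operator `T = δ𝓕(φ̄)`. -/
def Tlin (E : H → ℝ) (hess : H → H →L[ℝ] H) (φb φb' : ℝ → H)
    (sbar σA σB : ℝ) (ψ ψ' : ℝ → H) (α : ℝ) : H :=
  Pperp (φb' α) (hess (φb α) (ψ α) - lamBar E φb φb' α • ψ' α)
    + (α * (α - 1) / (sbar * (sbar - 1))) • Pproj (φb' α) (hess (φb sbar) (ψ sbar))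
    + ((σA + σB) * (gFun φb' ψ' α - α * (α - 1) / (sbar * (sbar - 1)) * gFun φb' ψ' sbar)
        - lamBar E φb φb' α * gFun' φb' ψ' α) • (‖φb' α‖⁻¹ • φb' α)

/-- Assumption (B). -/
def AssumpB (hess : H → H →L[ℝ] H) (yA yB vA vB : H) (σA σB : ℝ) : Prop :=
  hess yA vA = σA • vA ∧ hess yB vB = σB • vB ∧
  (∀ μ ∈ spectrum ℝ (hess yA), σA ≤ μ) ∧
  (∀ μ ∈ spectrum ℝ (hess yB), σB ≤ μ) ∧
  (∃ ε > 0, ∀ μ ∈ spectrum ℝ (hess yA), μ ≠ σA → σA + ε ≤ μ) ∧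
  (∃ ε > 0, ∀ μ ∈ spectrum ℝ (hess yB), μ ≠ σB → σB + ε ≤ μ) ∧
  (∀ u : H, hess yA u = σA • u → ∃ c : ℝ, u = c • vA) ∧
  (∀ u : H, hess yB u = σB • u → ∃ c : ℝ, u = c • vB)

/-- `P_v` as a continuous linear map. -/
def projL (v : H) : H →L[ℝ] H := (innerSL ℝ (‖v‖⁻¹ • v)).smulRight (‖v‖⁻¹ • v)

/-- `P_v^⊥` as a continuous linear map. -/
def projPerpL (v : H) : H →L[ℝ] H := ContinuousLinearMap.id ℝ H - projL v

/-- `B(α) = P⊥ ∇²E(φ̄(α)) P⊥`. -/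
def Bop (hess : H → H →L[ℝ] H) (φb φb' : ℝ → H) (α : ℝ) : H →L[ℝ] H :=
  (projPerpL (φb' α)).comp ((hess (φb α)).comp (projPerpL (φb' α)))

/-- `D(α) y = −(y,t'(α))t(α) − (y,t(α))t'(α)`. -/
def Dop (t t' : ℝ → H) (α : ℝ) : H →L[ℝ] H :=
  -((innerSL ℝ (t' α)).smulRight (t α)) - (innerSL ℝ (t α)).smulRight (t' α)

/-- The operator `A(α)`. -/
def Aop {K : Type*} [NormedAddCommGroup K] [InnerProductSpace ℝ K] [CompleteSpace K]
    (E : H → ℝ) (hess : H → H →L[ℝ] H) (φb φb' t' : ℝ → H)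
    (Q Q' : ℝ → K →L[ℝ] H) (α : ℝ) : K →L[ℝ] K :=
  (ContinuousLinearMap.adjoint (Q α)).comp ((Bop hess φb φb' α).comp (Q α))
    - lamBar E φb φb' α •
        ((ContinuousLinearMap.adjoint (Q α)).comp
            ((Dop (fun s => ‖φb' s‖⁻¹ • φb' s) t' α).comp (Q α))
          - (ContinuousLinearMap.adjoint (Q α)).comp (Q' α))

/-- `ω_S`. -/
def omegaS (hess : H → H →L[ℝ] H) (yS : H) : ℝ :=
  sInf {l : ℝ | l ∈ spectrum ℝ (hess yS) ∧ 0 < l}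

/-- `ω_B`. -/
def omegaB (hess : H → H →L[ℝ] H) (yB : H) (σB : ℝ) : ℝ :=
  sInf {l : ℝ | l ∈ spectrum ℝ (hess yB) ∧ l ≠ σB}

/-- The tube `𝒰_ε` around the path. -/
def Utube (φb : ℝ → H) (ε : ℝ) : Set H := {y : H | ∃ α ∈ Icc (0:ℝ) 1, ‖y - φb α‖ ≤ ε}

/-- Restriction of a second derivative to a subspace. -/
def restrict2 (K : Submodule ℝ H) (T : H →L[ℝ] H →L[ℝ] ℝ) : K →L[ℝ] K →L[ℝ] ℝ :=
  (((ContinuousLinearMap.compL ℝ K H ℝ).flip K.subtypeL)).comp (T.comp K.subtypeL)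

/-- `C⁰` distance between `E'` (on the subspace `K`) and `E`, over `S`. -/
def subC0dist (K : Submodule ℝ H) (E : H → ℝ) (E' : K → ℝ) (S : Set K) : ℝ :=
  ⨆ y : S, |E' y.1 - E (y.1 : H)|

/-- `C¹` distance between `E'` (on the subspace `K`) and `E`, over `S`. -/
def subC1dist (K : Submodule ℝ H) (E : H → ℝ) (E' : K → ℝ) (S : Set K) : ℝ :=
  subC0dist K E E' S +
    ⨆ y : S, ‖fderiv ℝ E' y.1 - (fderiv ℝ E (y.1 : H)).comp K.subtypeL‖

/-- `C²` distance between `E'` (on the subspace `K`) and `E`, over `S`. -/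
def subC2dist (K : Submodule ℝ H) (E : H → ℝ) (E' : K → ℝ) (S : Set K) : ℝ :=
  subC1dist K E E' S +
    ⨆ y : S, @Norm.norm (K →L[ℝ] K →L[ℝ] ℝ)
        (ContinuousLinearMap.hasOpNorm (𝕜 := ℝ) (𝕜₂ := ℝ) (σ₁₂ := RingHom.id ℝ) (E := K)
          (F := K →L[ℝ] ℝ))
        (fderiv ℝ (fun z => fderiv ℝ E' z) y.1
        - restrict2 K (fderiv ℝ (fun z => fderiv ℝ E z) (y.1 : H)))


lemma unit_smul_pos {c : ℝ} (hc : 0 < c) {v : H} (hv : v ≠ 0) :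
    ‖c • v‖⁻¹ • (c • v) = ‖v‖⁻¹ • v := by
  rw [norm_smul, Real.norm_eq_abs, abs_of_pos hc, smul_smul, mul_inv]
  congr 1
  rw [mul_comm c⁻¹ ‖v‖⁻¹, mul_assoc, inv_mul_cancel₀ hc.ne', mul_one]

lemma Pperp_smul_pos {c : ℝ} (hc : 0 < c) {v : H} (hv : v ≠ 0) (y : H) :
    Pperp (c • v) y = Pperp v y := by
  unfold Pperp Pproj
  rw [unit_smul_pos hc hv]

lemma Pperp_eq_zero_of_comb {v : H} (hv : v ≠ 0) {G G2 : H} {a b c : ℝ}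
    (h : Pperp v G - a • Pproj v G + b • Pproj v G2 + c • (‖v‖⁻¹ • v) = 0) :
    Pperp v G = 0 := by
  have hnv : ‖v‖ ≠ 0 := norm_ne_zero_iff.mpr hv
  have huu : ⟪(‖v‖⁻¹ • v : H), ‖v‖⁻¹ • v⟫ = 1 := by
    rw [real_inner_smul_left, real_inner_smul_right, real_inner_self_eq_norm_sq]
    field_simp
  have huw : ⟪(‖v‖⁻¹ • v : H), Pperp v G⟫ = 0 := by
    unfold Pperp Pproj
    rw [inner_sub_right, real_inner_smul_right, huu, real_inner_comm]
    ring
  have hvw : ⟪v, Pperp v G⟫ = 0 := by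
    rw [real_inner_smul_left] at huw
    exact (mul_eq_zero.mp huw).resolve_left (inv_ne_zero hnv)
  have hpj : ∀ y : H, ⟪Pproj v y, Pperp v G⟫ = 0 := by
    intro y
    unfold Pproj
    rw [real_inner_smul_left, real_inner_smul_left, hvw]
    ring
  have h2 := congrArg (fun z => ⟪z, Pperp v G⟫) h
  simp only [inner_add_left, inner_sub_left, real_inner_smul_left, inner_zero_left] at h2
  rw [hpj G, hpj G2, hvw] at h2
  have h3 : ⟪Pperp v G, Pperp v G⟫ = 0 := by linarith
  exact inner_self_eq_zero.mp h3

theorem stmt2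
    (E : H → ℝ) (hE : ContDiff ℝ 3 E)
    (hess : H → H →L[ℝ] H) (hhess : ∀ y : H, HasFDerivAt (gradient E) (hess y) y)
    (yA yB : H) (φb φb' φb'' : ℝ → H) (sbar : ℝ)
    (hA : AssumpA E hess yA yB φb φb' φb'' sbar)
    (σA σB : ℝ)
    (hσA : HasDerivWithinAt (lamBar E φb φb') σA (Icc (0:ℝ) 1) 0)
    (hσB : HasDerivWithinAt (lamBar E φb φb') σB (Icc (0:ℝ) 1) 1)
    (φ φ' : ℝ → H) (hφ : InU yA yB φ φ')
    (hF : ∀ α ∈ Icc (0:ℝ) 1, Fop E sbar σA σB φ φ' α = 0) :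
    ∃ φt φt' : ℝ → H,
      (∀ α ∈ Icc (0:ℝ) 1, φt ((∫ s in (0:ℝ)..α, ‖φ' s‖) / len φ') = φ α) ∧
      InU yA yB φt φt' ∧ SolvesMEP E φt φt' := by
  obtain ⟨⟨hder, hcont⟩, hφ0, hφ1, hne⟩ := hφ
  -- extended speed function
  set ρ : ℝ → ℝ := fun s => ‖φ' ((projIcc (0:ℝ) 1 zero_le_one s : ℝ))‖ with hρ
  have hρc : Continuous ρ := by
    have h1 : Continuous fun s : ℝ => ((projIcc (0:ℝ) 1 zero_le_one s : ℝ)) :=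
      continuous_subtype_val.comp continuous_projIcc
    exact (hcont.comp_continuous h1 fun x => (projIcc (0:ℝ) 1 zero_le_one x).2).norm
  have hρeq : ∀ s ∈ Icc (0:ℝ) 1, ρ s = ‖φ' s‖ := by
    intro s hs
    simp [hρ, projIcc_of_mem zero_le_one hs]
  obtain ⟨s₀, hs₀, hmin⟩ :=
    isCompact_Icc.exists_isMinOn (nonempty_Icc.mpr zero_le_one) hcont.norm
  set m := ‖φ' s₀‖ with hm
  have hm0 : 0 < m := norm_pos_iff.mpr (hne s₀ hs₀)
  have hρge : ∀ s, m ≤ ρ s := fun s =>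
    isMinOn_iff.mp hmin _ (projIcc (0:ℝ) 1 zero_le_one s).2
  have hρint : ∀ a b : ℝ, IntervalIntegrable ρ MeasureTheory.volume a b := fun a b =>
    hρc.intervalIntegrable a b
  set Hf : ℝ → ℝ := fun α => ∫ s in (0:ℝ)..α, ρ s with hHf
  have hkey : ∀ a b : ℝ, a ≤ b → m * (b - a) ≤ Hf b - Hf a := by
    intro a b hab
    have h1 : Hf b - Hf a = ∫ s in a..b, ρ s :=
      intervalIntegral.integral_interval_sub_left (hρint 0 b) (hρint 0 a)
    have h2 : (∫ _ in a..b, (m : ℝ)) ≤ ∫ s in a..b, ρ s :=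
      intervalIntegral.integral_mono_on hab intervalIntegrable_const (hρint a b)
        fun s _ => hρge s
    rw [intervalIntegral.integral_const, smul_eq_mul] at h2
    rw [h1]
    nlinarith
  have hHd : ∀ α, HasDerivAt Hf (ρ α) α := fun α =>
    (hρc.integral_hasStrictDerivAt 0 α).hasDerivAt
  have hHc : Continuous Hf := by
    rw [continuous_iff_continuousAt]
    exact fun α => (hHd α).continuousAt
  have hH0 : Hf 0 = 0 := intervalIntegral.integral_same
  have hLeq : Hf 1 = len φ' := by
    apply intervalIntegral.integral_congr
    intro s hs
    rw [uIcc_of_le zero_le_one] at hs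
    exact hρeq s hs
  have hL0 : 0 < len φ' := by
    have hk := hkey 0 1 zero_le_one
    rw [hH0, hLeq] at hk
    nlinarith
  set L := len φ' with hLdef
  set h : ℝ → ℝ := fun α => Hf α / L with hh
  have hhd : ∀ α, HasDerivAt h (ρ α / L) α := fun α => (hHd α).div_const L
  have hhmono : StrictMono h := by
    intro a b hab
    have hk := hkey a b hab.le
    have h3 : Hf a < Hf b := by nlinarith
    exact (div_lt_div_iff_of_pos_right hL0).mpr h3
  have hconth : Continuous h := hHc.div_const L
  have htop : Filter.Tendsto h Filter.atTop Filter.atTop := by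
    apply Filter.tendsto_atTop_mono' Filter.atTop
      (f₁ := fun α => m * α / L) _
      ((Filter.Tendsto.const_mul_atTop hm0 Filter.tendsto_id).atTop_div_const hL0)
    filter_upwards [Filter.eventually_ge_atTop (0:ℝ)] with α hα
    have hk := hkey 0 α hα
    rw [hH0] at hk
    have h4 : m * α ≤ Hf α := by linarith
    show m * α / L ≤ Hf α / L
    gcongr
  have hbot : Filter.Tendsto h Filter.atBot Filter.atBot := by
    apply Filter.tendsto_atBot_mono' Filter.atBot
      (f₁ := fun α => m * α / L) _
      ((Filter.Tendsto.const_mul_atBot hm0 Filter.tendsto_id).atBot_div_const hL0)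
    filter_upwards [Filter.eventually_le_atBot (0:ℝ)] with α hα
    have hk := hkey α 0 hα
    rw [hH0] at hk
    have h4 : Hf α ≤ m * α := by linarith
    show Hf α / L ≤ m * α / L
    gcongr
  have hsurj : Function.Surjective h := hconth.surjective htop hbot
  set e := StrictMono.orderIsoOfSurjective h hhmono hsurj with he
  set g : ℝ → ℝ := fun β => e.symm β with hg
  have hgc : Continuous g := OrderIso.continuous e.symm
  have hhg : ∀ β, h (g β) = β := fun β => e.apply_symm_apply β
  have hgh : ∀ α, g (h α) = α := fun α => e.symm_apply_apply α
  have hgmono : Monotone g := (e.symm : ℝ ≃o ℝ).monotone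
  have hρne : ∀ α, ρ α ≠ 0 := fun α => (lt_of_lt_of_le hm0 (hρge α)).ne'
  have hgd : ∀ β, HasDerivAt g (L / ρ (g β)) β := by
    intro β
    have hd1 := HasDerivAt.of_local_left_inverse hgc.continuousAt (hhd (g β))
      (div_ne_zero (hρne _) hL0.ne') (Filter.Eventually.of_forall hhg)
    rwa [inv_div] at hd1
  have hone : h 1 = 1 := by
    show Hf 1 / L = 1
    rw [hLeq]
    exact div_self hL0.ne'
  have hzero : h 0 = 0 := by
    show Hf 0 / L = 0
    rw [hH0, zero_div]
  have hg0 : g 0 = 0 := by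
    have := hgh 0
    rwa [hzero] at this
  have hg1 : g 1 = 1 := by
    have := hgh 1
    rwa [hone] at this
  have hgmaps : MapsTo g (Icc (0:ℝ) 1) (Icc (0:ℝ) 1) := by
    intro β hβ
    constructor
    · have := hgmono hβ.1
      rwa [hg0] at this
    · have := hgmono hβ.2
      rwa [hg1] at this
  have hnegβ : ∀ β ∈ Icc (0:ℝ) 1, φ' (g β) ≠ 0 := fun β hβ => hne _ (hgmaps hβ)
  have hcpos : ∀ β ∈ Icc (0:ℝ) 1, 0 < L / ‖φ' (g β)‖ := fun β hβ =>
    div_pos hL0 (norm_pos_iff.mpr (hnegβ β hβ))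
  refine ⟨fun β => φ (g β), fun β => (L / ‖φ' (g β)‖) • φ' (g β), ?_, ?_, ?_, ?_⟩
  · -- reparameterization property
    intro α hα
    have hint : (∫ s in (0:ℝ)..α, ‖φ' s‖) = Hf α := by
      apply intervalIntegral.integral_congr
      intro s hs
      rw [uIcc_of_le hα.1] at hs
      exact (hρeq s ⟨hs.1, hs.2.trans hα.2⟩).symm
    rw [hint]
    exact congrArg φ (hgh α)
  · -- InU
    refine ⟨⟨?_, ?_⟩, by simp [hg0, hφ0], by simp [hg1, hφ1], ?_⟩
    · intro β hβ
      have hα : g β ∈ Icc (0:ℝ) 1 := hgmaps hβ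
      have h1 : HasDerivWithinAt φ (φ' (g β)) (Icc (0:ℝ) 1) (g β) := hder _ hα
      have h2 : HasDerivWithinAt g (L / ρ (g β)) (Icc (0:ℝ) 1) β :=
        (hgd β).hasDerivWithinAt
      have h3 := h1.scomp β h2 hgmaps
      rw [hρeq _ hα] at h3
      exact h3
    · have hφ'g : ContinuousOn (fun β => φ' (g β)) (Icc (0:ℝ) 1) :=
        hcont.comp hgc.continuousOn hgmaps
      exact (continuousOn_const.div hφ'g.norm fun β hβ =>
        norm_ne_zero_iff.mpr (hnegβ β hβ)).smul hφ'g
    · intro β hβ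
      exact smul_ne_zero (hcpos β hβ).ne' (hnegβ β hβ)
  · -- perpendicularity
    intro β hβ
    have hα : g β ∈ Icc (0:ℝ) 1 := hgmaps hβ
    have hv : φ' (g β) ≠ 0 := hnegβ β hβ
    have hFα := hF (g β) hα
    unfold Fop at hFα
    have hperp := Pperp_eq_zero_of_comb hv hFα
    rw [Pperp_smul_pos (hcpos β hβ) hv]
    exact hperp
  · -- Gam ≡ 0
    have hnorm : ∀ s ∈ Icc (0:ℝ) 1, ‖(L / ‖φ' (g s)‖) • φ' (g s)‖ = L := by
      intro s hs
      rw [norm_smul, Real.norm_eq_abs, abs_of_pos (hcpos s hs),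
        div_mul_cancel₀ _ (norm_ne_zero_iff.mpr (hnegβ s hs))]
    have hlen : len (fun β => (L / ‖φ' (g β)‖) • φ' (g β)) = L := by
      unfold len
      rw [intervalIntegral.integral_congr (g := fun _ => L) (by
        intro s hs
        rw [uIcc_of_le zero_le_one] at hs
        exact hnorm s hs)]
      simp
    intro β hβ
    unfold Gam
    rw [hlen]
    rw [intervalIntegral.integral_congr (g := fun _ => L) (by
      intro s hs
      rw [uIcc_of_le hβ.1] at hs
      exact hnorm s ⟨hs.1, hs.2.trans hβ.2⟩)]
    simp [mul_comm]
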